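/- Jacobian of the cubic change of variables (eq. CMLE.1): fix ξ ∈ ℂ with ξ ≠ 0 and a constant c ∈ ℂ. For every N×N complex matrix M such that ξ·I − M is invertible, write R = (ξ·I − M)⁻¹; then the map F(M) = ((ξ·I − M)⁻¹ − ξ⁻¹·I) · ( tr((ξ·I − M)⁻¹) + c ) is differentiable at M and its divergence satisfies div F(M) = (tr R)³ + c·(tr R)² + tr(R³) − ξ⁻¹·tr(R²). -/

import Mathlib

open Matrix

attribute [local instance] Matrix.normedAddCommGroup Matrix.normedSpace

/-- The divergence of a map `F` on `N×N` complex matrices at `M`: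
`div F (M) = ∑_{i,j} (D F_{ij})(M)[E_{ij}]`, where `E_{ij}` is the elementary matrix. -/
noncomputable def matrixDivergence {N : ℕ}
    (F : Matrix (Fin N) (Fin N) ℂ → Matrix (Fin N) (Fin N) ℂ)
    (M : Matrix (Fin N) (Fin N) ℂ) : ℂ :=
  ∑ i : Fin N, ∑ j : Fin N,
    fderiv ℂ (fun X => F X i j) M (Matrix.single i j (1 : ℂ))

open Asymptotics Filter
namespace CMLEaux

variable {N : ℕ}

/-- submultiplicativity (up to `N`) of the entrywise sup norm. -/
lemma norm_mul_le' (A B : Matrix (Fin N) (Fin N) ℂ) : ‖A * B‖ ≤ N * ‖A‖ * ‖B‖ := by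
  have h0 : (0:ℝ) ≤ N * ‖A‖ * ‖B‖ := by positivity
  rw [Matrix.norm_le_iff h0]
  intro i j
  rw [Matrix.mul_apply]
  calc ‖∑ k, A i k * B k j‖ ≤ ∑ k, ‖A i k * B k j‖ := norm_sum_le _ _
    _ ≤ ∑ _k : Fin N, ‖A‖ * ‖B‖ := by
        refine Finset.sum_le_sum fun k _ => ?_
        rw [norm_mul]
        exact mul_le_mul (Matrix.norm_entry_le_entrywise_sup_norm A)
          (Matrix.norm_entry_le_entrywise_sup_norm B) (norm_nonneg _) (norm_nonneg _)
    _ = N * ‖A‖ * ‖B‖ := by simp [mul_assoc]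

/-- `H ↦ P * H * Q` as a continuous linear map. -/
noncomputable def mulLR (P Q : Matrix (Fin N) (Fin N) ℂ) :
    Matrix (Fin N) (Fin N) ℂ →L[ℂ] Matrix (Fin N) (Fin N) ℂ :=
  LinearMap.toContinuousLinearMap
    { toFun := fun H => P * H * Q
      map_add' := fun H K => by noncomm_ring
      map_smul' := fun a H => by simp [Matrix.mul_smul, Matrix.smul_mul] }

@[simp] lemma mulLR_apply (P Q H : Matrix (Fin N) (Fin N) ℂ) : mulLR P Q H = P * H * Q := rfl

/-- entry evaluation as a continuous linear map. -/
noncomputable def entryCLM (i j : Fin N) : Matrix (Fin N) (Fin N) ℂ →L[ℂ] ℂ :=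
  LinearMap.toContinuousLinearMap
    { toFun := fun H => H i j
      map_add' := fun H K => rfl
      map_smul' := fun a H => rfl }

@[simp] lemma entryCLM_apply (i j : Fin N) (H : Matrix (Fin N) (Fin N) ℂ) :
    entryCLM i j H = H i j := rfl

/-- the key derivative: `X ↦ (ξ•1 - X)⁻¹` has derivative `H ↦ R H R` at `M`. -/
lemma hasFDerivAt_resolvent (ξ : ℂ) (M : Matrix (Fin N) (Fin N) ℂ)
    (hM : IsUnit (ξ • (1 : Matrix (Fin N) (Fin N) ℂ) - M)) :
    HasFDerivAt (fun X : Matrix (Fin N) (Fin N) ℂ => (ξ • (1 : Matrix (Fin N) (Fin N) ℂ) - X)⁻¹)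
      (mulLR (ξ • (1 : Matrix (Fin N) (Fin N) ℂ) - M)⁻¹
        (ξ • (1 : Matrix (Fin N) (Fin N) ℂ) - M)⁻¹) M := by
  set A : Matrix (Fin N) (Fin N) ℂ → Matrix (Fin N) (Fin N) ℂ :=
    fun X => ξ • (1 : Matrix (Fin N) (Fin N) ℂ) - X with hA
  set g : Matrix (Fin N) (Fin N) ℂ → Matrix (Fin N) (Fin N) ℂ := fun X => (A X)⁻¹ with hg
  set R := (A M)⁻¹ with hR
  have hdet : IsUnit (A M).det := (Matrix.isUnit_iff_isUnit_det _).1 hM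
  have h1 : A M * R = 1 := Matrix.mul_nonsing_inv _ hdet
  have h2 : R * A M = 1 := Matrix.nonsing_inv_mul _ hdet
  -- continuity of A and of det ∘ A
  have hAcont : Continuous A := continuous_const.sub continuous_id
  have hdetcont : ContinuousAt (fun X => (A X).det) M :=
    (hAcont.matrix_det).continuousAt
  -- continuity of g at M
  have hinvC : ContinuousAt Ring.inverse (A M).det := by
    simpa using NormedRing.inverse_continuousAt hdet.unit
  have hgc : ContinuousAt g M :=
    (continuousAt_matrix_inv (A M) hinvC).comp hAcont.continuousAt
  -- eventually X is invertible
  have hdetne : (A M).det ≠ 0 := hdet.ne_zero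
  have hev : ∀ᶠ X in nhds M, (A X).det ≠ 0 := hdetcont.eventually_ne hdetne
  refine hasFDerivAt_iff_isLittleO.mpr ?_
  rw [Asymptotics.isLittleO_iff]
  intro ε hε
  set K : ℝ := (N:ℝ)^2 * (‖R‖ + 1) + 1 with hK
  have hK0 : 0 < K := by positivity
  have hδ : (0:ℝ) < ε / K := by positivity
  have h3 : ∀ᶠ X in nhds M, ‖g X - g M‖ < ε / K := by
    have := hgc.tendsto
    have h4 := Metric.tendsto_nhds.mp this (ε / K) hδ
    filter_upwards [h4] with X hX
    simpa [dist_eq_norm] using hX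
  filter_upwards [h3, hev] with X hX hXinv
  -- the algebraic identity
  have hXu : IsUnit (A X).det := isUnit_iff_ne_zero.mpr hXinv
  have h5 : g X * A X = 1 := Matrix.nonsing_inv_mul _ hXu
  have hgM : g M = R := rfl
  have hAMX : A M - A X = X - M := by simp only [hA]; abel
  have key : g X - g M = g X * (X - M) * g M := by
    have h8 : g X * (A M - A X) * g M = g X - g M := by
      rw [mul_sub, sub_mul, mul_assoc, h1, mul_one, h5, one_mul, hgM]
    rw [← h8, hAMX]
  have key2 : g X - g M - (mulLR R R) (X - M) = (g X - g M) * (X - M) * g M := by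
    rw [mulLR_apply, sub_mul, sub_mul, ← key, hgM]
  refine (congrArg norm key2).trans_le ?_
  calc ‖(g X - g M) * (X - M) * g M‖
      ≤ (N:ℝ) * ‖(g X - g M) * (X - M)‖ * ‖g M‖ := norm_mul_le' _ _
    _ ≤ (N:ℝ) * ((N:ℝ) * ‖g X - g M‖ * ‖X - M‖) * ‖g M‖ := by
        have := norm_mul_le' (g X - g M) (X - M)
        have hN : (0:ℝ) ≤ (N:ℝ) := Nat.cast_nonneg _
        gcongr
    _ = (N:ℝ)^2 * ‖g M‖ * ‖g X - g M‖ * ‖X - M‖ := by ring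
    _ ≤ (N:ℝ)^2 * ‖g M‖ * (ε / K) * ‖X - M‖ := by
        have h6 : (0:ℝ) ≤ (N:ℝ)^2 * ‖g M‖ := by positivity
        gcongr
    _ ≤ ε * ‖X - M‖ := by
        have h7 : (N:ℝ)^2 * ‖g M‖ ≤ K := by
          rw [hK, hgM]
          nlinarith [norm_nonneg R, sq_nonneg (N:ℝ)]
        calc (N:ℝ)^2 * ‖g M‖ * (ε / K) * ‖X - M‖
            ≤ K * (ε / K) * ‖X - M‖ := by gcongr
          _ = ε * ‖X - M‖ := by field_simp

end CMLEaux

/-- Jacobian of the cubic change of variables (eq. CMLE.1): for `ξ ≠ 0`, a constant `c ∈ ℂ`,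
and `F(M) = ((ξ·I − M)⁻¹ − ξ⁻¹·I) · ( tr((ξ·I − M)⁻¹) + c )`, whenever `ξ·I − M` is
invertible, `F` is differentiable at `M` and, writing `R = (ξ·I − M)⁻¹`,
`div F (M) = (tr R)³ + c·(tr R)² + tr(R³) − ξ⁻¹·tr(R²)`. -/
theorem jacobian_cubic_change_of_variables (N : ℕ) (ξ : ℂ) (hξ : ξ ≠ 0) (c : ℂ)
    (M : Matrix (Fin N) (Fin N) ℂ)
    (hM : IsUnit (ξ • (1 : Matrix (Fin N) (Fin N) ℂ) - M)) :
    DifferentiableAt ℂ (fun X : Matrix (Fin N) (Fin N) ℂ =>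
        (((ξ • (1 : Matrix (Fin N) (Fin N) ℂ) - X)⁻¹).trace + c) •
          ((ξ • (1 : Matrix (Fin N) (Fin N) ℂ) - X)⁻¹ - ξ⁻¹ • (1 : Matrix (Fin N) (Fin N) ℂ))) M ∧
      matrixDivergence (fun X =>
          (((ξ • (1 : Matrix (Fin N) (Fin N) ℂ) - X)⁻¹).trace + c) •
            ((ξ • (1 : Matrix (Fin N) (Fin N) ℂ) - X)⁻¹ - ξ⁻¹ • (1 : Matrix (Fin N) (Fin N) ℂ))) M
        = (((ξ • (1 : Matrix (Fin N) (Fin N) ℂ) - M)⁻¹).trace) ^ 3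
          + c * (((ξ • (1 : Matrix (Fin N) (Fin N) ℂ) - M)⁻¹).trace) ^ 2
          + ((ξ • (1 : Matrix (Fin N) (Fin N) ℂ) - M)⁻¹ *
              (ξ • (1 : Matrix (Fin N) (Fin N) ℂ) - M)⁻¹ *
              (ξ • (1 : Matrix (Fin N) (Fin N) ℂ) - M)⁻¹).trace
          - ξ⁻¹ * ((ξ • (1 : Matrix (Fin N) (Fin N) ℂ) - M)⁻¹ *
              (ξ • (1 : Matrix (Fin N) (Fin N) ℂ) - M)⁻¹).trace := by
  classical
  set R : Matrix (Fin N) (Fin N) ℂ := (ξ • (1 : Matrix (Fin N) (Fin N) ℂ) - M)⁻¹ with hR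
  have hΦ := CMLEaux.hasFDerivAt_resolvent ξ M hM
  -- entry derivatives
  have hEntry : ∀ i j : Fin N,
      HasFDerivAt (fun X : Matrix (Fin N) (Fin N) ℂ =>
          (ξ • (1 : Matrix (Fin N) (Fin N) ℂ) - X)⁻¹ i j)
        ((CMLEaux.entryCLM i j).comp (CMLEaux.mulLR R R)) M :=
    fun i j => ((CMLEaux.entryCLM i j).hasFDerivAt).comp M hΦ
  -- trace derivative
  have hTrace : HasFDerivAt (fun X : Matrix (Fin N) (Fin N) ℂ =>
        ((ξ • (1 : Matrix (Fin N) (Fin N) ℂ) - X)⁻¹).trace + c)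
      ((∑ k : Fin N, (CMLEaux.entryCLM k k).comp (CMLEaux.mulLR R R))) M := by
    have h := (HasFDerivAt.fun_sum (fun k (_ : k ∈ (Finset.univ : Finset (Fin N))) =>
      hEntry k k)).add_const c
    have hfun : (fun X : Matrix (Fin N) (Fin N) ℂ =>
        ((ξ • (1 : Matrix (Fin N) (Fin N) ℂ) - X)⁻¹).trace + c)
        = fun X => (∑ k : Fin N, (ξ • (1 : Matrix (Fin N) (Fin N) ℂ) - X)⁻¹ k k) + c := by
      funext X; rw [Matrix.trace]; rfl
    rw [hfun]
    exact h
  have hSub : ∀ i j : Fin N, HasFDerivAt (fun X : Matrix (Fin N) (Fin N) ℂ =>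
        (ξ • (1 : Matrix (Fin N) (Fin N) ℂ) - X)⁻¹ i j
          - (ξ⁻¹ • (1 : Matrix (Fin N) (Fin N) ℂ)) i j)
      ((CMLEaux.entryCLM i j).comp (CMLEaux.mulLR R R)) M :=
    fun i j => (hEntry i j).sub_const _
  have hFij : ∀ i j : Fin N, HasFDerivAt (fun X : Matrix (Fin N) (Fin N) ℂ =>
        ((((ξ • (1 : Matrix (Fin N) (Fin N) ℂ) - X)⁻¹).trace + c) •
          ((ξ • (1 : Matrix (Fin N) (Fin N) ℂ) - X)⁻¹
            - ξ⁻¹ • (1 : Matrix (Fin N) (Fin N) ℂ))) i j)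
      ((R.trace + c) • ((CMLEaux.entryCLM i j).comp (CMLEaux.mulLR R R))
        + (R i j - (ξ⁻¹ • (1 : Matrix (Fin N) (Fin N) ℂ)) i j) •
            (∑ k : Fin N, (CMLEaux.entryCLM k k).comp (CMLEaux.mulLR R R))) M := by
    intro i j
    have h := hTrace.mul (hSub i j)
    have hfun : (fun X : Matrix (Fin N) (Fin N) ℂ =>
        ((((ξ • (1 : Matrix (Fin N) (Fin N) ℂ) - X)⁻¹).trace + c) •
          ((ξ • (1 : Matrix (Fin N) (Fin N) ℂ) - X)⁻¹
            - ξ⁻¹ • (1 : Matrix (Fin N) (Fin N) ℂ))) i j)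
        = fun X => (((ξ • (1 : Matrix (Fin N) (Fin N) ℂ) - X)⁻¹).trace + c) *
            ((ξ • (1 : Matrix (Fin N) (Fin N) ℂ) - X)⁻¹ i j
              - (ξ⁻¹ • (1 : Matrix (Fin N) (Fin N) ℂ)) i j) := by
      funext X
      simp [Matrix.smul_apply, Matrix.sub_apply, smul_eq_mul]
    rw [hfun]
    exact h
  constructor
  · exact hTrace.differentiableAt.smul (hΦ.differentiableAt.sub_const _)
  · -- compute the divergence
    have hEapp : ∀ i j a b : Fin N,
        (R * Matrix.single i j (1:ℂ) * R) a b = R a i * R j b := by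
      intro i j a b
      rw [Matrix.mul_assoc, Matrix.mul_apply]
      have : ∀ k, (Matrix.single i j (1:ℂ) * R) k b
          = if k = i then R j b else 0 := by
        intro k
        by_cases hk : k = i
        · subst hk; simp
        · simp [Matrix.single_mul_apply_of_ne (1:ℂ) i j k b hk, hk]
      simp [this]
    unfold matrixDivergence
    have hval : ∀ i j : Fin N,
        fderiv ℂ (fun X : Matrix (Fin N) (Fin N) ℂ =>
          ((((ξ • (1 : Matrix (Fin N) (Fin N) ℂ) - X)⁻¹).trace + c) •
            ((ξ • (1 : Matrix (Fin N) (Fin N) ℂ) - X)⁻¹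
              - ξ⁻¹ • (1 : Matrix (Fin N) (Fin N) ℂ))) i j) M
            (Matrix.single i j (1 : ℂ))
        = (R.trace + c) * (R i i * R j j)
          + (R i j - (ξ⁻¹ • (1 : Matrix (Fin N) (Fin N) ℂ)) i j) *
              (∑ k : Fin N, R k i * R j k) := by
      intro i j
      rw [(hFij i j).fderiv]
      simp only [ContinuousLinearMap.add_apply, ContinuousLinearMap.smul_apply,
        ContinuousLinearMap.coe_comp', Function.comp_apply, CMLEaux.mulLR_apply,
        CMLEaux.entryCLM_apply, ContinuousLinearMap.sum_apply, smul_eq_mul]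
      rw [hEapp i j i j]
      congr 1
      congr 1
      exact Finset.sum_congr rfl fun k _ => by rw [hEapp i j k k]
    simp only [hval]
    -- now pure algebra with finite sums
    have hsplit : ∑ i : Fin N, ∑ j : Fin N,
        ((R.trace + c) * (R i i * R j j)
          + (R i j - (ξ⁻¹ • (1 : Matrix (Fin N) (Fin N) ℂ)) i j) *
              (∑ k : Fin N, R k i * R j k))
        = (R.trace + c) * (R.trace * R.trace)
          + ((R - ξ⁻¹ • (1 : Matrix (Fin N) (Fin N) ℂ)) * (R * R)).trace := by
      rw [Finset.sum_congr rfl fun i _ => Finset.sum_add_distrib, Finset.sum_add_distrib]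
      congr 1
      · simp only [Matrix.trace, Matrix.diag]
        show _ = (∑ a, R a a + c) * ((∑ a, R a a) * (∑ a, R a a))
        rw [Finset.sum_mul_sum]
        rw [Finset.mul_sum]
        exact Finset.sum_congr rfl fun i _ => by rw [Finset.mul_sum]
      · simp only [Matrix.trace, Matrix.diag]
        show _ = ∑ a, ((R - ξ⁻¹ • (1 : Matrix (Fin N) (Fin N) ℂ)) * (R * R)) a a
        refine Finset.sum_congr rfl fun i _ => ?_
        rw [Matrix.mul_apply]
        refine Finset.sum_congr rfl fun j _ => ?_
        rw [Matrix.mul_apply, Matrix.sub_apply]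
        congr 1
        exact Finset.sum_congr rfl fun k _ => mul_comm _ _
    rw [hsplit]
    have htr : ((R - ξ⁻¹ • (1 : Matrix (Fin N) (Fin N) ℂ)) * (R * R)).trace
        = (R * R * R).trace - ξ⁻¹ * (R * R).trace := by
      rw [Matrix.sub_mul, Matrix.smul_mul, Matrix.one_mul, Matrix.trace_sub,
        Matrix.trace_smul, smul_eq_mul, Matrix.mul_assoc]
    rw [htr]
    ring
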